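/- arXiv:1203.3002 — 2 statements merged into one kernel-verified Lean document; each statement's English description precedes it below -/
import Mathlib

section
/- Assume b = A x̄ + z, let δ' ∈ (0,1), γ > (1+δ')/(1−δ'), and λ > 0 satisfy λ ≥ max{4, (γ+1)/((1−δ')γ − (1+δ'))} · ‖Aᵀz‖_∞, and let Γ_u > 1 and s̃ ≥ 1 be an integer with ρ₋(A, s̄+2s̃) > 0 and s̃ > 16(Γ_u ρ₊(A, s̄+2s̃) + 2ρ₊(A, s̃)) (1+γ) s̄ / ρ₋(A, s̄+s̃). Suppose x ∈ ℝⁿ satisfies ‖x_{S̄ᶜ}‖₀ ≤ s̃ and φ_λ(x) ≤ φ_λ(x̄) + 2δ'(1+γ)λ² s̄ / ρ₋(A, s̄+s̃), and let 0 < L < Γ_u ρ₊(A, s̄+2s̃). Then ‖(T_{λ,L}(x))_{S̄ᶜ}‖₀ < s̃. -/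
open scoped BigOperators
open Matrix

noncomputable section

namespace PGH

/-- Euclidean dot product on `Fin n → ℝ`. -/
def dot {n : ℕ} (x y : Fin n → ℝ) : ℝ := ∑ i, x i * y i

/-- Squared Euclidean norm. -/
def sqnorm {n : ℕ} (x : Fin n → ℝ) : ℝ := ∑ i, (x i) ^ 2

/-- Euclidean (ℓ₂) norm. -/
noncomputable def l2 {n : ℕ} (x : Fin n → ℝ) : ℝ := Real.sqrt (sqnorm x)

/-- ℓ₁ norm. -/
def l1 {n : ℕ} (x : Fin n → ℝ) : ℝ := ∑ i, |x i|

/-- ℓ∞ norm (maximum absolute coordinate). -/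
noncomputable def linf {n : ℕ} (x : Fin n → ℝ) : ℝ := ⨆ i, |x i|

/-- Support of a vector. -/
def supp {n : ℕ} (x : Fin n → ℝ) : Finset (Fin n) := Finset.univ.filter (fun i => x i ≠ 0)

/-- Number of nonzero coordinates. -/
def l0 {n : ℕ} (x : Fin n → ℝ) : ℕ := (supp x).card

/-- Number of nonzero coordinates within the index set `S`
(i.e. `‖x_S‖₀` for the restriction of `x` to `S`). -/
def l0on {n : ℕ} (S : Finset (Fin n)) (x : Fin n → ℝ) : ℕ :=
  (S.filter (fun i => x i ≠ 0)).card

/-- ℓ₁ norm of the restriction of `x` to the index set `S`. -/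
def l1on {n : ℕ} (S : Finset (Fin n)) (x : Fin n → ℝ) : ℝ := ∑ i ∈ S, |x i|

/-- Gradient of `f(x) = (1/2)‖Ax - b‖₂²`, namely `Aᵀ(Ax - b)`. -/
def grad {m n : ℕ} (A : Matrix (Fin m) (Fin n) ℝ) (b : Fin m → ℝ) (x : Fin n → ℝ) :
    Fin n → ℝ :=
  Aᵀ.mulVec (A.mulVec x - b)

/-- Least-squares objective `f(x) = (1/2)‖Ax - b‖₂²`. -/
def fls {m n : ℕ} (A : Matrix (Fin m) (Fin n) ℝ) (b : Fin m → ℝ) (x : Fin n → ℝ) : ℝ :=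
  sqnorm (A.mulVec x - b) / 2

/-- ℓ₁-regularized least-squares objective `φ_λ(x) = f(x) + λ‖x‖₁`. -/
def phi {m n : ℕ} (A : Matrix (Fin m) (Fin n) ℝ) (b : Fin m → ℝ) (lam : ℝ)
    (x : Fin n → ℝ) : ℝ :=
  fls A b x + lam * l1 x

/-- Restricted maximal eigenvalue `ρ₊(A, s)`. -/
noncomputable def rhoPlus {m n : ℕ} (A : Matrix (Fin m) (Fin n) ℝ) (s : ℕ) : ℝ :=
  sSup {r | ∃ x : Fin n → ℝ, x ≠ 0 ∧ l0 x ≤ s ∧ r = sqnorm (A.mulVec x) / sqnorm x}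

/-- Restricted minimal eigenvalue `ρ₋(A, s)`. -/
noncomputable def rhoMinus {m n : ℕ} (A : Matrix (Fin m) (Fin n) ℝ) (s : ℕ) : ℝ :=
  sInf {r | ∃ x : Fin n → ℝ, x ≠ 0 ∧ l0 x ≤ s ∧ r = sqnorm (A.mulVec x) / sqnorm x}

/-- `ξ` is a subgradient of the ℓ₁ norm at `x`. -/
def IsSubgrad {n : ℕ} (x ξ : Fin n → ℝ) : Prop :=
  ∀ i, (x i ≠ 0 → ξ i = Real.sign (x i)) ∧ (x i = 0 → |ξ i| ≤ 1)

/-- Optimality residue `ω_λ(x) = min_{ξ ∈ ∂‖x‖₁} ‖Aᵀ(Ax−b) + λξ‖_∞`. -/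
noncomputable def omega {m n : ℕ} (A : Matrix (Fin m) (Fin n) ℝ) (b : Fin m → ℝ)
    (lam : ℝ) (x : Fin n → ℝ) : ℝ :=
  sInf {r | ∃ ξ : Fin n → ℝ, IsSubgrad x ξ ∧
    r = linf (fun i => grad A b x i + lam * ξ i)}

/-- The local model `ψ_{λ,L}(y; x)`. -/
def psi {m n : ℕ} (A : Matrix (Fin m) (Fin n) ℝ) (b : Fin m → ℝ) (lam L : ℝ)
    (y x : Fin n → ℝ) : ℝ :=
  fls A b y + dot (grad A b y) (x - y) + L / 2 * sqnorm (x - y) + lam * l1 x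

/-- The noise-domination condition
`λ ≥ max{4, (γ+1)/((1−δ')γ−(1+δ'))} ⬝ ‖Aᵀz‖_∞`. -/
def noiseCond {m n : ℕ} (A : Matrix (Fin m) (Fin n) ℝ) (z : Fin m → ℝ)
    (dp gam lam : ℝ) : Prop :=
  lam ≥ max 4 ((gam + 1) / ((1 - dp) * gam - (1 + dp))) * linf (Aᵀ.mulVec z)

section AUX
variable {m n : ℕ}

lemma sqnorm_nonneg (v : Fin n → ℝ) : 0 ≤ sqnorm v :=
  Finset.sum_nonneg fun i _ => sq_nonneg _

lemma sqnorm_pos {v : Fin n → ℝ} (hv : v ≠ 0) : 0 < sqnorm v := by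
  obtain ⟨i, hi⟩ : ∃ i, v i ≠ 0 := by
    by_contra h; push_neg at h; exact hv (funext h)
  have h2 : (0:ℝ) < (v i)^2 := by positivity
  refine lt_of_lt_of_le h2 ?_
  exact Finset.single_le_sum (f := fun j => (v j)^2) (fun j _ => sq_nonneg _) (Finset.mem_univ i)

lemma dot_sq_le (u v : Fin m → ℝ) : (dot u v)^2 ≤ sqnorm u * sqnorm v :=
  Finset.sum_mul_sq_le_sq_mul_sq _ _ _

lemma dot_mulVec_adj (A : Matrix (Fin m) (Fin n) ℝ) (v : Fin n → ℝ) (p : Fin m → ℝ) :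
    dot (A.mulVec v) p = dot v (Aᵀ.mulVec p) := by
  unfold dot Matrix.mulVec dotProduct
  simp only [Matrix.transpose_apply]
  simp_rw [Finset.sum_mul, Finset.mul_sum]
  rw [Finset.sum_comm]
  apply Finset.sum_congr rfl; intro i _; apply Finset.sum_congr rfl; intro j _; ring

lemma sqnorm_mulVec_le (A : Matrix (Fin m) (Fin n) ℝ) (v : Fin n → ℝ) :
    sqnorm (A.mulVec v) ≤ (∑ j, ∑ i, (A j i)^2) * sqnorm v := by
  unfold sqnorm Matrix.mulVec dotProduct
  rw [Finset.sum_mul]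
  apply Finset.sum_le_sum; intro j _
  exact Finset.sum_mul_sq_le_sq_mul_sq _ _ _

lemma rho_set_bddBelow (A : Matrix (Fin m) (Fin n) ℝ) (s : ℕ) :
    BddBelow {r | ∃ x : Fin n → ℝ, x ≠ 0 ∧ l0 x ≤ s ∧ r = sqnorm (A.mulVec x) / sqnorm x} := by
  refine ⟨0, fun r hr => ?_⟩
  obtain ⟨x, _, _, rfl⟩ := hr
  exact div_nonneg (sqnorm_nonneg _) (sqnorm_nonneg _)

lemma rho_set_bddAbove (A : Matrix (Fin m) (Fin n) ℝ) (s : ℕ) :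
    BddAbove {r | ∃ x : Fin n → ℝ, x ≠ 0 ∧ l0 x ≤ s ∧ r = sqnorm (A.mulVec x) / sqnorm x} := by
  refine ⟨∑ j, ∑ i, (A j i)^2, fun r hr => ?_⟩
  obtain ⟨x, hx, _, rfl⟩ := hr
  rw [div_le_iff₀ (sqnorm_pos hx)]
  exact sqnorm_mulVec_le A x

lemma rhoPlus_bound {A : Matrix (Fin m) (Fin n) ℝ} {s : ℕ} {v : Fin n → ℝ}
    (hv : v ≠ 0) (hl : l0 v ≤ s) : sqnorm (A.mulVec v) ≤ rhoPlus A s * sqnorm v := by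
  have hmem : sqnorm (A.mulVec v) / sqnorm v ∈
      {r | ∃ x : Fin n → ℝ, x ≠ 0 ∧ l0 x ≤ s ∧ r = sqnorm (A.mulVec x) / sqnorm x} :=
    ⟨v, hv, hl, rfl⟩
  have := le_csSup (rho_set_bddAbove A s) hmem
  rw [rhoPlus]
  calc sqnorm (A.mulVec v) = sqnorm (A.mulVec v) / sqnorm v * sqnorm v := by
        field_simp [(sqnorm_pos hv).ne']
    _ ≤ _ := mul_le_mul_of_nonneg_right this (sqnorm_nonneg _)

lemma rhoMinus_bound {A : Matrix (Fin m) (Fin n) ℝ} {s : ℕ} {v : Fin n → ℝ}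
    (hv : v ≠ 0) (hl : l0 v ≤ s) : rhoMinus A s * sqnorm v ≤ sqnorm (A.mulVec v) := by
  have hmem : sqnorm (A.mulVec v) / sqnorm v ∈
      {r | ∃ x : Fin n → ℝ, x ≠ 0 ∧ l0 x ≤ s ∧ r = sqnorm (A.mulVec x) / sqnorm x} :=
    ⟨v, hv, hl, rfl⟩
  have := csInf_le (rho_set_bddBelow A s) hmem
  rw [rhoMinus]
  calc rhoMinus A s * sqnorm v ≤ sqnorm (A.mulVec v) / sqnorm v * sqnorm v := by
        exact mul_le_mul_of_nonneg_right (by rw [rhoMinus] at *; exact this) (sqnorm_nonneg _)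
    _ = sqnorm (A.mulVec v) := by field_simp [(sqnorm_pos hv).ne']

lemma rhoMinus_anti (A : Matrix (Fin m) (Fin n) ℝ) {s₁ s₂ : ℕ} (h : s₁ ≤ s₂)
    (hne : {r | ∃ x : Fin n → ℝ, x ≠ 0 ∧ l0 x ≤ s₁ ∧
      r = sqnorm (A.mulVec x) / sqnorm x}.Nonempty) :
    rhoMinus A s₂ ≤ rhoMinus A s₁ := by
  apply csInf_le_csInf (rho_set_bddBelow A s₂) hne
  rintro r ⟨x, hx, hl, rfl⟩
  exact ⟨x, hx, hl.trans h, rfl⟩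

lemma quad_opt {L c t0 : ℝ} (hL : 0 < L) (ht0 : t0 ≠ 0)
    (h : ∀ s : ℝ, |s - t0| < |t0| → 0 ≤ (s - t0) * (c + L/2*(s-t0))) : c = 0 := by
  by_contra hc
  have hcabs : 0 < |c| := abs_pos.mpr hc
  have ht0abs : 0 < |t0| := abs_pos.mpr ht0
  set d : ℝ := min (1/L) (|t0|/(2*|c|)) with hd
  have hd0 : 0 < d := lt_min (by positivity) (by positivity)
  have hdL : d ≤ 1/L := min_le_left _ _
  have hdc : |d * c| < |t0| := by
    rw [abs_mul, abs_of_pos hd0]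
    calc d * |c| ≤ |t0|/(2*|c|) * |c| := by
          exact mul_le_mul_of_nonneg_right (min_le_right _ _) hcabs.le
      _ = |t0|/2 := by field_simp
      _ < |t0| := by linarith
  have := h (t0 - d*c) (by simpa using hdc)
  have hexp : (t0 - d*c - t0) * (c + L/2*(t0 - d*c - t0)) = d*c^2*(L*d/2 - 1) := by ring
  rw [hexp] at this
  have h1 : L*d ≤ 1 := by
    rw [le_div_iff₀ hL] at hdL; linarith [hdL]
  nlinarith [mul_pos hd0 (sq_pos_of_ne_zero hc)]

end AUX
section AUX2
variable {m n : ℕ}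

lemma prox_opt (A : Matrix (Fin m) (Fin n) ℝ) (b : Fin m → ℝ)
    (lam L : ℝ) (hL : 0 < L) (x T : Fin n → ℝ)
    (hT : ∀ u, psi A b lam L x T ≤ psi A b lam L x u)
    {i : Fin n} (hTi : T i ≠ 0) :
    grad A b x i + L * (T i - x i) + lam * Real.sign (T i) = 0 := by
  set g := grad A b x with hg
  have key : ∀ s : ℝ, 0 ≤ g i * (s - T i) + L/2*((s - x i)^2 - (T i - x i)^2)
      + lam * (|s| - |T i|) := by
    intro s
    have h0 := hT (Function.update T i s)
    unfold psi at h0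
    have e1 : dot g (Function.update T i s - x) - dot g (T - x) = g i * (s - T i) := by
      unfold dot
      rw [← Finset.sum_sub_distrib, Finset.sum_eq_single i]
      · simp [Function.update_self]; ring
      · intro j _ hji; simp [Function.update_of_ne hji]
      · intro h; exact absurd (Finset.mem_univ i) h
    have e2 : sqnorm (Function.update T i s - x) - sqnorm (T - x)
        = (s - x i)^2 - (T i - x i)^2 := by
      unfold sqnorm
      rw [← Finset.sum_sub_distrib, Finset.sum_eq_single i]
      · simp [Function.update_self]
      · intro j _ hji; simp [Function.update_of_ne hji]
      · intro h; exact absurd (Finset.mem_univ i) h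
    have e3 : l1 (Function.update T i s) - l1 T = |s| - |T i| := by
      unfold l1
      rw [← Finset.sum_sub_distrib, Finset.sum_eq_single i]
      · simp [Function.update_self]
      · intro j _ hji; simp [Function.update_of_ne hji]
      · intro h; exact absurd (Finset.mem_univ i) h
    have e2' : L/2 * sqnorm (Function.update T i s - x) - L/2 * sqnorm (T - x)
        = L/2 * ((s - x i)^2 - (T i - x i)^2) := by rw [← mul_sub, e2]
    have e3' : lam * l1 (Function.update T i s) - lam * l1 T = lam * (|s| - |T i|) := by
      rw [← mul_sub, e3]
    rw [← hg] at h0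
    linarith [h0, e1, e2', e3']
  set c : ℝ := g i + L * (T i - x i) + lam * Real.sign (T i) with hc
  have hquad : ∀ s : ℝ, |s - T i| < |T i| → 0 ≤ (s - T i) * (c + L/2*(s - T i)) := by
    intro s hs
    have hsig : |s| - |T i| = Real.sign (T i) * (s - T i) := by
      rcases lt_trichotomy (T i) 0 with h | h | h
      · have hs0 : s < 0 := by
          rcases abs_sub_lt_iff.mp hs with ⟨h1, h2⟩
          rw [abs_of_neg h] at h1 h2; linarith
        rw [Real.sign_of_neg h, abs_of_neg h, abs_of_neg hs0]; ring
      · exact absurd h hTi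
      · have hs0 : 0 < s := by
          rcases abs_sub_lt_iff.mp hs with ⟨h1, h2⟩
          rw [abs_of_pos h] at h1 h2; linarith
        rw [Real.sign_of_pos h, abs_of_pos h, abs_of_pos hs0]; ring
    have hk := key s
    rw [hsig] at hk
    have : (s - T i) * (c + L/2*(s - T i))
        = g i * (s - T i) + L/2*((s - x i)^2 - (T i - x i)^2)
          + lam * (Real.sign (T i) * (s - T i)) := by rw [hc]; ring
    linarith [this ▸ hk]
  exact quad_opt hL hTi hquad

end AUX2
section AUX3
variable {m n : ℕ}

lemma dot_comm (a c : Fin m → ℝ) : dot a c = dot c a := by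
  unfold dot
  exact Finset.sum_congr rfl fun i _ => mul_comm _ _

lemma dot_sub_right (a : Fin m → ℝ) (p q : Fin m → ℝ) :
    dot a (p - q) = dot a p - dot a q := by
  unfold dot
  rw [← Finset.sum_sub_distrib]
  exact Finset.sum_congr rfl fun i _ => by simp [Pi.sub_apply]; ring

lemma sqnorm_sub (p q : Fin m → ℝ) : sqnorm (p - q) = sqnorm p - 2 * dot p q + sqnorm q := by
  unfold sqnorm dot
  rw [Finset.mul_sum, ← Finset.sum_sub_distrib, ← Finset.sum_add_distrib]
  exact Finset.sum_congr rfl fun i _ => by simp [Pi.sub_apply]; ring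

lemma sign_sq {t : ℝ} (ht : t ≠ 0) : Real.sign t ^ 2 = 1 := by
  rcases lt_trichotomy t 0 with h | h | h
  · rw [Real.sign_of_neg h]; norm_num
  · exact absurd h ht
  · rw [Real.sign_of_pos h]; norm_num

lemma abs_sign_le (t : ℝ) : |Real.sign t| ≤ 1 := by
  rcases lt_trichotomy t 0 with h | h | h
  · rw [Real.sign_of_neg h]; norm_num
  · rw [h, Real.sign_zero]; norm_num
  · rw [Real.sign_of_pos h]; norm_num

lemma abs_sign_eq {t : ℝ} (ht : t ≠ 0) : |Real.sign t| = 1 := by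
  rcases lt_trichotomy t 0 with h | h | h
  · rw [Real.sign_of_neg h]; norm_num
  · exact absurd h ht
  · rw [Real.sign_of_pos h]; norm_num

lemma mul_sign_nonneg (t : ℝ) : 0 ≤ t * Real.sign t := by
  rcases lt_trichotomy t 0 with h | h | h
  · rw [Real.sign_of_neg h]; nlinarith
  · simp [h]
  · rw [Real.sign_of_pos h]; nlinarith

lemma sign_ne_zero {t : ℝ} (ht : t ≠ 0) : Real.sign t ≠ 0 := by
  rcases lt_trichotomy t 0 with h | h | h
  · rw [Real.sign_of_neg h]; norm_num
  · exact absurd h ht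
  · rw [Real.sign_of_pos h]; norm_num

end AUX3
set_option maxHeartbeats 2000000 in
theorem stmt5 {m n : ℕ} (A : Matrix (Fin m) (Fin n) ℝ) (b : Fin m → ℝ)
    (xbar : Fin n → ℝ) (z : Fin m → ℝ) (hb : b = A.mulVec xbar + z)
    (dp gam lam : ℝ) (hdp0 : 0 < dp) (hdp1 : dp < 1)
    (hgam : gam > (1 + dp) / (1 - dp))
    (hlam : 0 < lam) (hnoise : noiseCond A z dp gam lam)
    (Gu : ℝ) (hGu : 1 < Gu) (st : ℕ) (hst : 1 ≤ st)
    (hrho : 0 < rhoMinus A ((supp xbar).card + 2 * st))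
    (hstbig : (st : ℝ) > 16 * (Gu * rhoPlus A ((supp xbar).card + 2 * st)
        + 2 * rhoPlus A st) * (1 + gam) * ((supp xbar).card : ℝ) /
        rhoMinus A ((supp xbar).card + st))
    (x : Fin n → ℝ) (hxsp : l0on (supp xbar)ᶜ x ≤ st)
    (hobj : phi A b lam x ≤ phi A b lam xbar +
      2 * dp * (1 + gam) * lam ^ 2 * ((supp xbar).card : ℝ) /
        rhoMinus A ((supp xbar).card + st))
    (L : ℝ) (hL0 : 0 < L) (hL1 : L < Gu * rhoPlus A ((supp xbar).card + 2 * st))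
    (T : Fin n → ℝ) (hT : ∀ u, psi A b lam L x T ≤ psi A b lam L x u) :
    l0on (supp xbar)ᶜ T < st := by
  by_contra hK
  push_neg at hK
  -- notation
  set sbar : ℕ := (supp xbar).card with hsbar
  set ρ : ℝ := rhoMinus A (sbar + st) with hρdef
  set Q : ℝ := rhoPlus A st with hQdef
  set P' : ℝ := Gu * rhoPlus A (sbar + 2*st) with hP'def
  set NZ : ℝ := linf (Aᵀ.mulVec z) with hNZdef
  set Δ : Fin n → ℝ := x - xbar with hΔdef
  set Pv : Fin m → ℝ := A.mulVec Δ with hPvdef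
  set R : ℝ := sqnorm Pv with hRdef
  set u : ℝ := l1on (supp xbar) Δ with hudef
  set v : ℝ := l1on (supp xbar)ᶜ Δ with hvdef
  set g1 : ℝ := 1 + gam with hg1def
  set Sr : ℝ := (sbar : ℝ) with hSrdef
  set str : ℝ := (st : ℝ) with hstrdef
  set E : ℝ := 2 * dp * (1 + gam) * lam ^ 2 * ((sbar:ℕ) : ℝ) / ρ with hEdef
  clear_value sbar ρ Q P' NZ Δ Pv R u v g1 Sr str E
  have hdp1' : (0:ℝ) < 1 - dp := by linarith only [hdp1]
  have hg1two : 2 < (1 - dp) * g1 := by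
    have h1 : (1 + dp) < (1 - dp) * gam := by
      rw [gt_iff_lt, div_lt_iff₀ hdp1'] at hgam; linarith only [hgam]
    rw [hg1def]
    linarith only [h1]
  have hg1pos : (1:ℝ) < g1 := by nlinarith only [hg1two, hdp0, hdp1]
  -- the big support set of T off the true support
  set St : Finset (Fin n) := ((supp xbar)ᶜ).filter (fun i => T i ≠ 0) with hStdef
  obtain ⟨S', hS'sub, hS'card⟩ : ∃ S' ⊆ St, S'.card = st :=
    Finset.exists_subset_card_eq hK
  have hS'mem : ∀ i ∈ S', T i ≠ 0 ∧ i ∉ supp xbar := by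
    intro i hi
    have := hS'sub hi
    rw [hStdef, Finset.mem_filter, Finset.mem_compl] at this
    exact ⟨this.2, this.1⟩
  have hxbar0 : ∀ i, i ∉ supp xbar → xbar i = 0 := by
    intro i hi
    by_contra h
    exact hi (Finset.mem_filter.mpr ⟨Finset.mem_univ _, h⟩)
  obtain ⟨i₀, hi₀⟩ : ∃ i, i ∈ S' := by
    apply Finset.card_pos.mp; omega
  -- noise bounds
  have hNZ0 : 0 ≤ NZ := by
    rw [hNZdef]
    exact Real.iSup_nonneg (fun i => abs_nonneg _)
  have hNZ4 : NZ ≤ lam / 4 := by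
    have h1 : (4:ℝ) ≤ max 4 ((gam + 1) / ((1 - dp) * gam - (1 + dp))) := le_max_left _ _
    have h2 : 4 * NZ ≤ max 4 ((gam + 1) / ((1 - dp) * gam - (1 + dp))) * NZ :=
      mul_le_mul_of_nonneg_right h1 hNZ0
    have := hnoise
    rw [noiseCond] at this
    rw [← hNZdef] at this
    linarith only [h2, this, hNZ0]
  have hNZi : ∀ i, |Aᵀ.mulVec z i| ≤ NZ := by
    intro i
    rw [hNZdef]
    show |Aᵀ.mulVec z i| ≤ ⨆ j, |Aᵀ.mulVec z j|
    exact le_ciSup (f := fun j => |Aᵀ.mulVec z j|) (Set.Finite.bddAbove (Set.finite_range _)) i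
  -- positivity of ρ
  have hρ : 0 < ρ := by
    have hne : {r | ∃ y : Fin n → ℝ, y ≠ 0 ∧ l0 y ≤ sbar + st ∧
        r = sqnorm (A.mulVec y) / sqnorm y}.Nonempty := by
      refine ⟨sqnorm (A.mulVec (Pi.single i₀ 1)) / sqnorm (Pi.single i₀ 1),
        Pi.single i₀ 1, ?_, ?_, rfl⟩
      · intro h
        have := congrFun h i₀
        rw [Pi.single_eq_same] at this
        exact one_ne_zero this
      · have hsub : supp (Pi.single i₀ (1:ℝ)) ⊆ {i₀} := by
          intro j hj
          rw [Finset.mem_singleton]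
          by_contra hji
          rw [supp, Finset.mem_filter] at hj
          exact hj.2 (Pi.single_eq_of_ne hji 1)
        have := Finset.card_le_card hsub
        simp at this
        calc l0 (Pi.single i₀ (1:ℝ)) ≤ 1 := this
          _ ≤ sbar + st := by omega
    have h2 := rhoMinus_anti A (show sbar + st ≤ sbar + 2*st by omega) hne
    rw [hρdef]
    exact lt_of_lt_of_le hrho h2
  -- algebraic expansion of the objective gap
  have hAxb : A.mulVec x - b = Pv - z := by
    rw [hb, hPvdef, hΔdef, Matrix.mulVec_sub]
    abel
  have hAxbarb : A.mulVec xbar - b = -z := by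
    rw [hb]; abel
  have hfx : fls A b x = (R - 2 * dot Pv z + sqnorm z) / 2 := by
    rw [fls, hAxb, sqnorm_sub, hRdef]
  have hfxbar : fls A b xbar = sqnorm z / 2 := by
    rw [fls, hAxbarb]
    congr 1
    rw [sqnorm, sqnorm]
    exact Finset.sum_congr rfl fun i _ => by simp
  have hPz : dot Pv z = dot Δ (Aᵀ.mulVec z) := by
    rw [hPvdef]; exact dot_mulVec_adj A Δ z
  -- ℓ1 splits
  have hl1D : l1 Δ = u + v := by
    rw [hudef, hvdef, l1on, l1on, l1]
    exact (Finset.sum_add_sum_compl (supp xbar) _).symm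
  have hu0 : 0 ≤ u := by
    rw [hudef]
    exact Finset.sum_nonneg fun i _ => abs_nonneg _
  have hv0 : 0 ≤ v := by
    rw [hvdef]
    exact Finset.sum_nonneg fun i _ => abs_nonneg _
  have habsz : |dot Δ (Aᵀ.mulVec z)| ≤ (u + v) * (lam / 4) := by
    calc |dot Δ (Aᵀ.mulVec z)| ≤ ∑ i, |Δ i * Aᵀ.mulVec z i| :=
          Finset.abs_sum_le_sum_abs _ _
      _ ≤ ∑ i, |Δ i| * NZ := by
          apply Finset.sum_le_sum
          intro i _
          rw [abs_mul]
          exact mul_le_mul_of_nonneg_left (hNZi i) (abs_nonneg _)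
      _ = l1 Δ * NZ := by rw [l1, Finset.sum_mul]
      _ ≤ (u + v) * (lam / 4) := by
          rw [hl1D]
          exact mul_le_mul_of_nonneg_left hNZ4 (by linarith only [hu0, hv0])
  have hl1x : l1 xbar - l1 x ≤ u - v := by
    have e1 : l1 x = ∑ i ∈ supp xbar, |x i| + v := by
      rw [l1, ← Finset.sum_add_sum_compl (supp xbar) (fun i => |x i|)]
      congr 1
      rw [hvdef, l1on]
      exact Finset.sum_congr rfl fun i hi => by
        rw [hΔdef, Pi.sub_apply, hxbar0 i (Finset.mem_compl.mp hi), sub_zero]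
    have e2 : l1 xbar = ∑ i ∈ supp xbar, |xbar i| := by
      rw [l1, ← Finset.sum_add_sum_compl (supp xbar) (fun i => |xbar i|)]
      have : ∑ i ∈ (supp xbar)ᶜ, |xbar i| = 0 := by
        apply Finset.sum_eq_zero
        intro i hi
        rw [hxbar0 i (Finset.mem_compl.mp hi), abs_zero]
      rw [this, add_zero]
    have e3 : ∑ i ∈ supp xbar, |xbar i| - ∑ i ∈ supp xbar, |x i| ≤ u := by
      rw [hudef, l1on, ← Finset.sum_sub_distrib]
      apply Finset.sum_le_sum
      intro i _
      calc |xbar i| - |x i| ≤ |xbar i - x i| := abs_sub_abs_le_abs_sub _ _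
        _ = |Δ i| := by rw [hΔdef, Pi.sub_apply, ← abs_neg]; congr 1; ring
    linarith only [e1, e2, e3]
  -- the key inequality from the objective bound
  have h3 : R / 2 + (3 * lam / 4) * v ≤ (5 * lam / 4) * u + E := by
    have hphix : phi A b lam x = (R - 2 * dot Δ (Aᵀ.mulVec z) + sqnorm z) / 2 + lam * l1 x := by
      rw [phi, hfx, hPz]
    have hphixbar : phi A b lam xbar = sqnorm z / 2 + lam * l1 xbar := by
      rw [phi, hfxbar]
    rw [hphix, hphixbar] at hobj
    have h4 : dot Δ (Aᵀ.mulVec z) ≤ (u + v) * (lam / 4) := le_trans (le_abs_self _) habsz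
    have h5 : lam * (l1 xbar - l1 x) ≤ lam * (u - v) :=
      mul_le_mul_of_nonneg_left hl1x hlam.le
    have h5' : lam * l1 xbar - lam * l1 x ≤ lam * u - lam * v := by
      rw [← mul_sub, ← mul_sub]; exact h5
    have h4' : dot Δ (Aᵀ.mulVec z) ≤ lam / 4 * u + lam / 4 * v := by linarith only [h4]
    linarith only [hobj, h4', h5']
  have hSr0 : (0:ℝ) ≤ Sr := by rw [hSrdef]; positivity
  have hΔl0 : l0 Δ ≤ sbar + st := by
    have hsub : supp Δ ⊆ supp xbar ∪ ((supp xbar)ᶜ.filter (fun i => x i ≠ 0)) := by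
      intro i hi
      rw [supp, Finset.mem_filter] at hi
      by_cases hi2 : i ∈ supp xbar
      · exact Finset.mem_union_left _ hi2
      · refine Finset.mem_union_right _ (Finset.mem_filter.mpr
          ⟨Finset.mem_compl.mpr hi2, ?_⟩)
        intro hx0
        apply hi.2
        rw [hΔdef, Pi.sub_apply, hx0, hxbar0 i hi2, sub_zero]
    calc l0 Δ ≤ (supp xbar ∪ ((supp xbar)ᶜ.filter (fun i => x i ≠ 0))).card :=
          Finset.card_le_card hsub
      _ ≤ sbar + ((supp xbar)ᶜ.filter (fun i => x i ≠ 0)).card := by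
          rw [hsbar]; exact Finset.card_union_le _ _
      _ ≤ sbar + st := by
          have : l0on (supp xbar)ᶜ x = ((supp xbar)ᶜ.filter (fun i => x i ≠ 0)).card := rfl
          omega
  have hρD : ρ * sqnorm Δ ≤ R := by
    by_cases hD : Δ = 0
    · have h1 : sqnorm (0 : Fin n → ℝ) = 0 := by simp [sqnorm]
      rw [hD, h1, mul_zero, hRdef]
      exact sqnorm_nonneg _
    · rw [hRdef, hPvdef, hρdef]
      exact rhoMinus_bound hD hΔl0
  have hu2 : u^2 ≤ Sr * sqnorm Δ := by
    have hcs := Finset.sum_mul_sq_le_sq_mul_sq (supp xbar) (fun _ => (1:ℝ)) (fun i => |Δ i|)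
    calc u^2 = (∑ i ∈ supp xbar, 1 * |Δ i|)^2 := by
          rw [hudef, l1on]; congr 1
          exact Finset.sum_congr rfl fun i _ => (one_mul _).symm
      _ ≤ (∑ _i ∈ supp xbar, (1:ℝ)^2) * (∑ i ∈ supp xbar, |Δ i|^2) := hcs
      _ = Sr * ∑ i ∈ supp xbar, |Δ i|^2 := by
          rw [hSrdef, hsbar]
          simp
      _ ≤ Sr * sqnorm Δ := by
          apply mul_le_mul_of_nonneg_left _ hSr0
          calc ∑ i ∈ supp xbar, |Δ i|^2 = ∑ i ∈ supp xbar, Δ i ^2 :=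
                Finset.sum_congr rfl fun i _ => sq_abs _
            _ ≤ sqnorm Δ := Finset.sum_le_sum_of_subset_of_nonneg
                (Finset.subset_univ _) (fun i _ _ => sq_nonneg _)
  have hu2R : ρ * u^2 ≤ Sr * R := by
    have a1 := mul_le_mul_of_nonneg_left hu2 hρ.le
    have a2 := mul_le_mul_of_nonneg_left hρD hSr0
    linarith only [a1, a2]
  -- the sign vector on S'
  set w : Fin n → ℝ := fun j => if j ∈ S' then Real.sign (T j) else 0 with hwdef
  have hstr1 : (1:ℝ) ≤ str := by rw [hstrdef]; exact_mod_cast hst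
  have hdotw : ∀ a : Fin n → ℝ, dot a w = ∑ i ∈ S', a i * Real.sign (T i) := by
    intro a
    calc dot a w = ∑ j, (if j ∈ S' then a j * Real.sign (T j) else 0) := by
          rw [dot]
          refine Finset.sum_congr rfl fun j _ => ?_
          rw [hwdef]
          by_cases h : j ∈ S' <;> simp [h]
      _ = ∑ j ∈ S', a j * Real.sign (T j) := by
          rw [Finset.sum_ite_mem, Finset.univ_inter]
  have hw_abs : ∑ j, |w j| = str := by
    calc ∑ j, |w j| = ∑ j, (if j ∈ S' then |Real.sign (T j)| else 0) := by
          refine Finset.sum_congr rfl fun j _ => ?_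
          rw [hwdef]
          by_cases h : j ∈ S' <;> simp [h]
      _ = ∑ j ∈ S', |Real.sign (T j)| := by rw [Finset.sum_ite_mem, Finset.univ_inter]
      _ = ∑ _j ∈ S', (1:ℝ) := Finset.sum_congr rfl fun j hj => abs_sign_eq (hS'mem j hj).1
      _ = str := by rw [Finset.sum_const, hS'card, nsmul_eq_mul, hstrdef, mul_one]
  have hw_sq : sqnorm w = str := by
    calc sqnorm w = ∑ j, (if j ∈ S' then (Real.sign (T j))^2 else 0) := by
          rw [sqnorm]
          refine Finset.sum_congr rfl fun j _ => ?_
          rw [hwdef]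
          by_cases h : j ∈ S' <;> simp [h]
      _ = ∑ j ∈ S', (Real.sign (T j))^2 := by rw [Finset.sum_ite_mem, Finset.univ_inter]
      _ = ∑ _j ∈ S', (1:ℝ) := Finset.sum_congr rfl fun j hj => sign_sq (hS'mem j hj).1
      _ = str := by rw [Finset.sum_const, hS'card, nsmul_eq_mul, hstrdef, mul_one]
  have hw0 : w ≠ 0 := by
    intro h
    have h1 := congrFun h i₀
    rw [hwdef] at h1
    simp only [hi₀, if_true] at h1
    exact sign_ne_zero (hS'mem i₀ hi₀).1 h1
  have hwl0 : l0 w ≤ st := by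
    have hsub : supp w ⊆ S' := by
      intro j hj
      rw [supp, Finset.mem_filter] at hj
      by_contra h
      apply hj.2
      rw [hwdef]
      simp [h]
    calc l0 w ≤ S'.card := Finset.card_le_card hsub
      _ = st := hS'card
  have hQst : sqnorm (A.mulVec w) ≤ Q * str := by
    have h1 := rhoPlus_bound (A := A) hw0 hwl0
    rw [hw_sq] at h1
    rw [hQdef]
    exact h1
  have hQ0 : (0:ℝ) ≤ Q := by
    have h0 : 0 ≤ Q * str := le_trans (sqnorm_nonneg _) hQst
    by_contra hneg
    push_neg at hneg
    have h2 : Q * str < 0 := mul_neg_of_neg_of_pos hneg (lt_of_lt_of_le one_pos hstr1)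
    linarith only [h0, h2]
  -- optimality equations on S'
  have heq : ∀ i ∈ S', grad A b x i + L * (T i - x i) = -(lam * Real.sign (T i)) := by
    intro i hi
    have h1 := prox_opt A b lam L hL0 x T hT (hS'mem i hi).1
    linarith only [h1]
  have hsum : ∑ i ∈ S', (grad A b x i + L * (T i - x i)) * Real.sign (T i)
      = -(lam * str) := by
    calc ∑ i ∈ S', (grad A b x i + L * (T i - x i)) * Real.sign (T i)
        = ∑ _i ∈ S', -lam := by
          refine Finset.sum_congr rfl fun i hi => ?_
          rw [heq i hi, show -(lam * Real.sign (T i)) * Real.sign (T i)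
            = -(lam * (Real.sign (T i))^2) from by ring, sign_sq (hS'mem i hi).1, mul_one]
      _ = -(lam * str) := by
          rw [Finset.sum_const, hS'card, nsmul_eq_mul, hstrdef]; ring
  have hexpand : ∑ i ∈ S', (grad A b x i + L * (T i - x i)) * Real.sign (T i)
      = dot (grad A b x) w + (L * (∑ i ∈ S', T i * Real.sign (T i))
        - L * (∑ i ∈ S', x i * Real.sign (T i))) := by
    calc ∑ i ∈ S', (grad A b x i + L * (T i - x i)) * Real.sign (T i)
        = ∑ i ∈ S', (grad A b x i * Real.sign (T i)
            + (L * (T i * Real.sign (T i)) - L * (x i * Real.sign (T i)))) :=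
          Finset.sum_congr rfl fun i _ => by ring
      _ = ∑ i ∈ S', grad A b x i * Real.sign (T i)
            + (∑ i ∈ S', L * (T i * Real.sign (T i))
              - ∑ i ∈ S', L * (x i * Real.sign (T i))) := by
          rw [Finset.sum_add_distrib, Finset.sum_sub_distrib]
      _ = dot (grad A b x) w + (L * (∑ i ∈ S', T i * Real.sign (T i))
            - L * (∑ i ∈ S', x i * Real.sign (T i))) := by
          rw [hdotw, Finset.mul_sum, Finset.mul_sum]
  have hTσpos : 0 ≤ ∑ i ∈ S', T i * Real.sign (T i) :=
    Finset.sum_nonneg fun i _ => mul_sign_nonneg _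
  have hS'subc : S' ⊆ (supp xbar)ᶜ := fun i hi => Finset.mem_compl.mpr (hS'mem i hi).2
  have hxσ : ∑ i ∈ S', x i * Real.sign (T i) ≤ v := by
    calc ∑ i ∈ S', x i * Real.sign (T i) ≤ ∑ i ∈ S', |x i| := by
          refine Finset.sum_le_sum fun i _ => ?_
          refine le_trans (le_abs_self _) ?_
          rw [abs_mul]
          calc |x i| * |Real.sign (T i)| ≤ |x i| * 1 :=
                mul_le_mul_of_nonneg_left (abs_sign_le _) (abs_nonneg _)
            _ = |x i| := mul_one _
      _ = ∑ i ∈ S', |Δ i| := by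
          refine Finset.sum_congr rfl fun i hi => ?_
          rw [hΔdef, Pi.sub_apply, hxbar0 i (hS'mem i hi).2, sub_zero]
      _ ≤ v := by
          rw [hvdef, l1on]
          exact Finset.sum_le_sum_of_subset_of_nonneg hS'subc
            fun i _ _ => abs_nonneg _
  have hgww : dot (grad A b x) w = dot (A.mulVec w) Pv - dot w (Aᵀ.mulVec z) := by
    have h1 : dot (A.mulVec w) (Pv - z) = dot w (grad A b x) := by
      rw [dot_mulVec_adj, grad, hAxb]
    rw [dot_comm, ← h1, dot_sub_right, dot_mulVec_adj A w z]
  set tt : ℝ := |dot (A.mulVec w) Pv| with httdef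
  have htt0 : 0 ≤ tt := abs_nonneg _
  have htt2 : tt^2 ≤ Q * str * R := by
    rw [httdef, sq_abs]
    calc (dot (A.mulVec w) Pv)^2 ≤ sqnorm (A.mulVec w) * sqnorm Pv := dot_sq_le _ _
      _ ≤ Q * str * R := by
          rw [← hRdef]
          exact mul_le_mul_of_nonneg_right hQst (by rw [hRdef]; exact sqnorm_nonneg _)
  have hwz : |dot w (Aᵀ.mulVec z)| ≤ str * (lam / 4) := by
    calc |dot w (Aᵀ.mulVec z)| ≤ ∑ j, |w j * Aᵀ.mulVec z j| := Finset.abs_sum_le_sum_abs _ _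
      _ ≤ ∑ j, |w j| * NZ := by
          refine Finset.sum_le_sum fun j _ => ?_
          rw [abs_mul]
          exact mul_le_mul_of_nonneg_left (hNZi j) (abs_nonneg _)
      _ = str * NZ := by rw [← Finset.sum_mul, hw_abs]
      _ ≤ str * (lam / 4) := mul_le_mul_of_nonneg_left hNZ4 (by linarith only [hstr1])
  have h6 : lam * str ≤ tt + str * (lam / 4) + L * v := by
    have hkey : dot (A.mulVec w) Pv - dot w (Aᵀ.mulVec z)
        + (L * (∑ i ∈ S', T i * Real.sign (T i))
          - L * (∑ i ∈ S', x i * Real.sign (T i))) = -(lam * str) := by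
      rw [← hgww, ← hexpand]; exact hsum
    have b1 : L * (∑ i ∈ S', x i * Real.sign (T i)) ≤ L * v :=
      mul_le_mul_of_nonneg_left hxσ hL0.le
    have b2 : 0 ≤ L * (∑ i ∈ S', T i * Real.sign (T i)) := mul_nonneg hL0.le hTσpos
    have b3 : -(dot (A.mulVec w) Pv) ≤ tt := by
      rw [httdef]
      exact neg_le_abs _
    have b4 : dot w (Aᵀ.mulVec z) ≤ str * (lam / 4) := le_trans (le_abs_self _) hwz
    linarith only [hkey, b1, b2, b3, b4]
  -- final arithmetic
  have hg1p0 : (0:ℝ) < g1 := by linarith only [hg1pos]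
  have hρE : ρ * E = 2*dp*g1*lam^2*Sr := by
    rw [hEdef, hg1def, hSrdef]
    field_simp
  have h3ρ : ρ*R/2 + (3*lam/4)*(ρ*v) ≤ (5*lam/4)*(ρ*u) + 2*dp*g1*lam^2*Sr := by
    have h1 := mul_le_mul_of_nonneg_left h3 hρ.le
    linarith only [h1, hρE]
  have hcoef : 25/4 + 8*(dp*g1) ≤ 9*g1 := by linarith only [hg1two, hg1pos]
  have hStepA : ρ*R ≤ 9*g1*lam^2*Sr := by
    rcases eq_or_lt_of_le hSr0 with hS0 | hSpos
    · rw [← hS0] at hu2R h3ρ ⊢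
      have hu2' : u^2 ≤ 0 := by nlinarith only [hu2R, hρ, sq_nonneg u]
      have hu0' : u = 0 :=
        pow_eq_zero_iff two_ne_zero |>.mp (le_antisymm hu2' (sq_nonneg u))
      rw [hu0'] at h3ρ
      have hvρ : 0 ≤ lam*(ρ*v) := mul_nonneg hlam.le (mul_nonneg hρ.le hv0)
      linarith only [h3ρ, hvρ]
    · have f1 := mul_le_mul_of_nonneg_left h3ρ hSr0
      have f2 := mul_le_mul_of_nonneg_left hu2R hρ.le
      have f3 := sq_nonneg (ρ*u - (5/2)*lam*Sr)
      have f4 : 0 ≤ (9*g1 - (25/4 + 8*(dp*g1))) * (lam^2*Sr^2) :=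
        mul_nonneg (by linarith only [hcoef]) (by positivity)
      have f5 : 0 ≤ Sr * ((3*lam/4)*(ρ*v)) :=
        mul_nonneg hSr0 (mul_nonneg (by positivity) (mul_nonneg hρ.le hv0))
      nlinarith only [f1, f2, f3, f4, f5, hSpos]
  have hStepB : ρ*u ≤ 3*g1*lam*Sr := by
    have h1 : (ρ*u)^2 ≤ (3*g1*lam*Sr)^2 := by
      have f2 := mul_le_mul_of_nonneg_left hu2R hρ.le
      have f3 := mul_le_mul_of_nonneg_left hStepA hSr0
      have f4 : 0 ≤ (g1-1)*g1 :=
        mul_nonneg (by linarith only [hg1pos]) hg1p0.le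
      have f5 : 0 ≤ ((g1-1)*g1) * (9*(lam^2*Sr^2)) := mul_nonneg f4 (by positivity)
      nlinarith only [f2, f3, f5]
    exact (pow_le_pow_iff_left₀ (mul_nonneg hρ.le hu0) (by positivity) two_ne_zero).mp h1
  have hStepC : ρ*v ≤ (23/3)*g1*lam*Sr := by
    have hint2 := mul_le_mul_of_nonneg_left hStepB (by positivity : (0:ℝ) ≤ 5*lam/4)
    have hint3 : 0 ≤ (1-dp) * (g1*(lam^2*Sr)) :=
      mul_nonneg hdp1'.le (mul_nonneg hg1p0.le (mul_nonneg (sq_nonneg _) hSr0))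
    have hR0 : 0 ≤ R := by rw [hRdef]; exact sqnorm_nonneg _
    have hρR0 : 0 ≤ ρ*R := mul_nonneg hρ.le hR0
    have hC1 : lam * (ρ*v) ≤ lam * ((23/3)*g1*lam*Sr) := by
      nlinarith only [h3ρ, hint2, hint3, hρR0]
    exact le_of_mul_le_mul_left hC1 hlam
  have hstr0 : (0:ℝ) ≤ str := by linarith only [hstr1]
  have hD1 : (ρ*tt)^2 ≤ 4*(ρ*lam*str/4)*(9*Q*g1*lam*Sr) := by
    have f1 := mul_le_mul_of_nonneg_left htt2 (mul_nonneg hρ.le hρ.le)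
    have f2 := mul_le_mul_of_nonneg_left hStepA
      (mul_nonneg (mul_nonneg hQ0 hstr0) hρ.le)
    nlinarith only [f1, f2]
  have hD : ρ*tt ≤ ρ*lam*str/4 + 9*Q*g1*lam*Sr := by
    have h1 : (ρ*tt)^2 ≤ (ρ*lam*str/4 + 9*Q*g1*lam*Sr)^2 := by
      have := sq_nonneg (ρ*lam*str/4 - 9*Q*g1*lam*Sr)
      nlinarith only [hD1, this]
    have hX : 0 ≤ ρ*lam*str/4 + 9*Q*g1*lam*Sr := by positivity
    exact (pow_le_pow_iff_left₀ (mul_nonneg hρ.le htt0) hX two_ne_zero).mp h1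
  have hρ6 := mul_le_mul_of_nonneg_left h6 hρ.le
  have hLC := mul_le_mul_of_nonneg_left hStepC hL0.le
  have hE1 : lam * (ρ*str) ≤ lam * (18*Q*g1*Sr + (46/3)*L*g1*Sr) := by
    nlinarith only [hρ6, hD, hLC]
  have hEfin : ρ*str ≤ 18*Q*g1*Sr + (46/3)*L*g1*Sr := le_of_mul_le_mul_left hE1 hlam
  rw [gt_iff_lt, div_lt_iff₀ hρ] at hstbig
  have hf1 : L*(g1*Sr) ≤ P'*(g1*Sr) :=
    mul_le_mul_of_nonneg_right hL1.le (mul_nonneg hg1p0.le hSr0)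
  have hf2 : 0 ≤ Q*(g1*Sr) := mul_nonneg hQ0 (mul_nonneg hg1p0.le hSr0)
  have hf3 : 0 ≤ P'*(g1*Sr) :=
    mul_nonneg (lt_trans hL0 hL1).le (mul_nonneg hg1p0.le hSr0)
  linarith only [hEfin, hstbig, hf1, hf2, hf3]
end PGH
end
end

section
/- Let 0 < δ < δ' < 1, λ > 0, and suppose x ∈ ℝⁿ satisfies ω_λ(x) ≤ δλ. Let λ' = ηλ where η satisfies (1+δ)/(1+δ') ≤ η < 1. Then ω_{λ'}(x) ≤ δ'λ'. -/
open scoped BigOperators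
open Matrix

noncomputable section

namespace PGH

lemma linf_le' {n : ℕ} {v : Fin n → ℝ} {c : ℝ} (hc : 0 ≤ c) (h : ∀ i, |v i| ≤ c) :
    linf v ≤ c := Real.iSup_le h hc

lemma abs_le_linf' {n : ℕ} (v : Fin n → ℝ) (i : Fin n) : |v i| ≤ linf v :=
  le_ciSup (Set.Finite.bddAbove (Set.finite_range fun j => |v j|)) i

lemma linf_nonneg' {n : ℕ} (v : Fin n → ℝ) : 0 ≤ linf v :=
  Real.iSup_nonneg (fun i => abs_nonneg _)

lemma sign_abs_le' (a : ℝ) : |Real.sign a| ≤ 1 := by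
  unfold Real.sign; split_ifs <;> norm_num

theorem stmt6 {m n : ℕ} (A : Matrix (Fin m) (Fin n) ℝ) (b : Fin m → ℝ)
    (del dp lam eta : ℝ) (hdel : 0 < del) (hdd : del < dp) (hdp : dp < 1)
    (hlam : 0 < lam) (x : Fin n → ℝ)
    (hx : omega A b lam x ≤ del * lam)
    (heta1 : (1 + del) / (1 + dp) ≤ eta) (heta2 : eta < 1) :
    omega A b (eta * lam) x ≤ dp * (eta * lam) := by
  unfold omega at hx ⊢
  have hdp1 : (0:ℝ) < 1 + dp := by linarith
  have hetapos : 0 < eta := lt_of_lt_of_le (by positivity) heta1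
  have hel : 0 < eta * lam := by positivity
  have hkey : (1 + del) * lam ≤ eta * (1 + dp) * lam := by
    have h1 : 1 + del ≤ eta * (1 + dp) := (div_le_iff₀ hdp1).mp heta1
    nlinarith
  set g : Fin n → ℝ := grad A b x with hg
  have hS : {r | ∃ ξ : Fin n → ℝ, IsSubgrad x ξ ∧
      r = linf (fun i => g i + lam * ξ i)}.Nonempty := by
    refine ⟨_, fun i => Real.sign (x i), fun i => ⟨fun _ => rfl, fun h => ?_⟩, rfl⟩
    simp [h]
  apply le_of_forall_pos_le_add
  intro ε hε
  obtain ⟨r, ⟨ξ, hξ, hr⟩, hlt⟩ := Real.lt_sInf_add_pos hS hε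
  have hrb : r < del * lam + ε := lt_of_lt_of_le hlt (by linarith [hx])
  -- new subgradient
  set ξ' : Fin n → ℝ := fun i =>
    if x i = 0 then max (-1) (min 1 (-(g i) / (eta * lam))) else Real.sign (x i) with hξ'def
  have hξ' : IsSubgrad x ξ' := by
    intro i
    constructor
    · intro h; simp [hξ'def, h]
    · intro h
      simp only [hξ'def, h, if_pos]
      exact abs_le.mpr ⟨le_max_left _ _, max_le (by norm_num) (min_le_left _ _)⟩
  have hbound : ∀ i, |g i + (eta * lam) * ξ' i| ≤ dp * (eta * lam) + ε := by
    intro i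
    have hri : |g i + lam * ξ i| ≤ r := by rw [hr]; exact abs_le_linf' (fun j => g j + lam * ξ j) i
    by_cases h : x i = 0
    · -- off-support case
      have hξi : |ξ i| ≤ 1 := (hξ i).2 h
      have hgi : |g i| ≤ r + lam := by
        have : g i = (g i + lam * ξ i) - lam * ξ i := by ring
        rw [this]
        refine (abs_sub _ _).trans ?_
        have h2 : |lam * ξ i| ≤ lam := by
          rw [abs_mul, abs_of_pos hlam]
          nlinarith
        linarith
      simp only [hξ'def, h, if_pos]
      by_cases hcase : |g i| ≤ eta * lam
      · have habs := abs_le.mp hcase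
        have ht1 : -(g i) / (eta * lam) ≤ 1 := by
          rw [div_le_one hel]; linarith [habs.1]
        have ht2 : (-1 : ℝ) ≤ -(g i) / (eta * lam) := by
          rw [le_div_iff₀ hel]; linarith [habs.2]
        rw [min_eq_right ht1, max_eq_right ht2]
        have : g i + eta * lam * (-(g i) / (eta * lam)) = 0 := by
          field_simp
          ring
        rw [this, abs_zero]
        nlinarith [mul_pos (show (0:ℝ) < dp by linarith) hel, hε]
      · push_neg at hcase
        rcases lt_trichotomy (g i) 0 with hneg | hzero | hpos
        · -- g i < 0, so -(g i) > eta*lam, clamp = 1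
          have hgibig : eta * lam < -(g i) := by
            rw [abs_of_neg hneg] at hcase; linarith
          have ht1 : (1:ℝ) ≤ -(g i) / (eta * lam) := by
            rw [le_div_iff₀ hel]; linarith
          rw [min_eq_left ht1, max_eq_right (by norm_num : (-1:ℝ) ≤ 1)]
          have habs2 : |g i + eta * lam * 1| = -(g i) - eta * lam := by
            rw [abs_of_neg (by linarith)]; ring
          rw [habs2]
          have : |g i| = -(g i) := abs_of_neg hneg
          nlinarith [hgi, hrb]
        · exfalso; rw [hzero, abs_zero] at hcase; linarith
        · -- g i > eta*lam, clamp = -1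
          have hgibig : eta * lam < g i := by
            rw [abs_of_pos hpos] at hcase; linarith
          have ht1 : -(g i) / (eta * lam) ≤ 1 := by
            rw [div_le_one hel]; linarith
          have ht2 : -(g i) / (eta * lam) < -1 := by
            rw [div_lt_iff₀ hel]; linarith
          rw [min_eq_right ht1, max_eq_left ht2.le]
          have habs2 : |g i + eta * lam * (-1)| = g i - eta * lam := by
            rw [abs_of_pos (by linarith)]; ring
          rw [habs2]
          have : |g i| = g i := abs_of_pos hpos
          nlinarith [hgi, hrb]
    · -- on-support case
      have hξi : ξ i = Real.sign (x i) := (hξ i).1 h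
      simp only [hξ'def, h, if_neg, not_false_iff]
      have hs : |Real.sign (x i)| ≤ 1 := sign_abs_le' _
      have heq : g i + eta * lam * Real.sign (x i)
          = (g i + lam * ξ i) - ((1 - eta) * lam) * Real.sign (x i) := by
        rw [hξi]; ring
      rw [heq]
      have hnn : (0:ℝ) ≤ (1 - eta) * lam := by nlinarith
      have h3 : |((1 - eta) * lam) * Real.sign (x i)| ≤ (1 - eta) * lam := by
        rw [abs_mul, abs_of_nonneg hnn]
        exact mul_le_of_le_one_right hnn hs
      have h4 := (abs_sub (g i + lam * ξ i) (((1 - eta) * lam) * Real.sign (x i)))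
      nlinarith [hrb]
  -- conclude
  have hmem : linf (fun i => g i + (eta * lam) * ξ' i) ∈
      {r | ∃ ξ : Fin n → ℝ, IsSubgrad x ξ ∧
        r = linf (fun i => g i + (eta * lam) * ξ i)} := ⟨ξ', hξ', rfl⟩
  have hbdd : BddBelow {r | ∃ ξ : Fin n → ℝ, IsSubgrad x ξ ∧
      r = linf (fun i => g i + (eta * lam) * ξ i)} := by
    refine ⟨0, fun r hr => ?_⟩
    obtain ⟨ζ, _, hrζ⟩ := hr
    rw [hrζ]; exact linf_nonneg' _
  have hfin : (0:ℝ) ≤ dp * (eta * lam) + ε := by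
    have hdp0 : (0:ℝ) < dp := lt_trans hdel hdd
    nlinarith [mul_pos hdp0 hel]
  calc sInf {r | ∃ ξ : Fin n → ℝ, IsSubgrad x ξ ∧
      r = linf (fun i => g i + (eta * lam) * ξ i)} ≤ linf (fun i => g i + (eta * lam) * ξ' i) :=
        csInf_le hbdd hmem
    _ ≤ dp * (eta * lam) + ε := linf_le' hfin hbound


end PGH
end
end
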